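/- For every α ∈ (0,1), the profile function Φ satisfies the fractional differential equation D^α_C Φ(x) = −(1/(1+α))·x·Φ(x) for all x > 0, together with Φ(0) = 1, where D^α_C denotes the Caputo fractional derivative of order α. -/

import Mathlib

open Real MeasureTheory Set Filter Topology

noncomputable def bCoef (α : ℝ) (n : ℕ) : ℝ :=
  ∏ i ∈ Finset.range n, Real.Gamma (α * i + i + 2) / Real.Gamma (α * (i + 1) + i + 2)

/-- The profile function `Φ(x) = ∑ bₙ (−x^{1+α}/(1+α))ⁿ`. -/
noncomputable def Phi (α : ℝ) (x : ℝ) : ℝ :=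
  ∑' n : ℕ, bCoef α n * (-(x ^ (1 + α)) / (1 + α)) ^ n

/-- The Caputo fractional derivative of order `α`. -/
noncomputable def caputo (α : ℝ) (f : ℝ → ℝ) (x : ℝ) : ℝ :=
  (1 / Real.Gamma (1 - α)) * ∫ τ in (0:ℝ)..x, deriv f τ * (x - τ) ^ (-α)

/-- The normalizing constant `a₀` with `1/a₀ = 2∫₀^∞ Φ`. -/
noncomputable def a0 (α : ℝ) : ℝ := (2 * ∫ x in Set.Ioi (0:ℝ), Phi α x)⁻¹

/-- The fundamental solution `𝔈_t(x) = a₀ t^{−1/(1+α)} Φ(|x| t^{−1/(1+α)})`. -/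
noncomputable def fundSol (α t x : ℝ) : ℝ :=
  a0 α * t ^ (-1/(1+α)) * Phi α (|x| * t ^ (-1/(1+α)))

noncomputable def C1 (α : ℝ) : ℝ :=
  α * (2:ℝ) ^ (1+α) * max (∫ u in (1/2:ℝ)..1, u ^ (-(1+α)) * (1-u) ^ (α-1)) 2

noncomputable def C2 (α : ℝ) : ℝ := 2 * a0 α * C1 α

section AuxLemmas

lemma bCoef_pos {α : ℝ} (hα : 0 < α) (n : ℕ) : 0 < bCoef α n := by
  apply Finset.prod_pos
  intro i _
  apply div_pos <;> apply Real.Gamma_pos_of_pos <;> positivity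

lemma bCoef_succ {α : ℝ} (n : ℕ) :
    bCoef α (n + 1) = bCoef α n *
      (Real.Gamma (α * n + n + 2) / Real.Gamma (α * (n + 1) + n + 2)) := by
  rw [bCoef, Finset.prod_range_succ]; rfl

lemma gamma_ratio_lb {α : ℝ} (hα : 0 < α) (hα1 : α < 1) {d : ℝ} (hd : 2 ≤ d) :
    (d - 1 + α) ^ α * Real.Gamma d ≤ Real.Gamma (d + α) := by
  have h1 : (0:ℝ) < d - 1 + α := by linarith
  have h2 : (0:ℝ) < d + α := by linarith
  have hc := Real.convexOn_log_Gamma.2 (Set.mem_Ioi.mpr h1) (Set.mem_Ioi.mpr h2)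
    (le_of_lt hα) (by linarith : (0:ℝ) ≤ 1 - α) (by ring)
  have key : α • (d - 1 + α) + (1 - α) • (d + α) = d := by
    simp only [smul_eq_mul]; ring
  rw [key] at hc
  simp only [Function.comp] at hc
  have hGpos1 := Real.Gamma_pos_of_pos h1
  have hGpos2 := Real.Gamma_pos_of_pos h2
  have hGd := Real.Gamma_pos_of_pos (show (0:ℝ) < d by linarith)
  have hG1 : Real.Gamma (d + α) = (d - 1 + α) * Real.Gamma (d - 1 + α) := by
    have := Real.Gamma_add_one (ne_of_gt h1)
    rw [show d - 1 + α + 1 = d + α by ring] at this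
    exact this
  have hlog : Real.log (Real.Gamma (d - 1 + α))
      = Real.log (Real.Gamma (d + α)) - Real.log (d - 1 + α) := by
    rw [hG1, Real.log_mul (ne_of_gt h1) (ne_of_gt hGpos1)]; ring
  rw [hlog] at hc
  simp only [smul_eq_mul] at hc
  have hc' : Real.log (d - 1 + α) * α + Real.log (Real.Gamma d)
      ≤ Real.log (Real.Gamma (d + α)) := by nlinarith [hc]
  have := Real.exp_le_exp.mpr hc'
  rwa [Real.exp_add, Real.exp_log hGd, Real.exp_log hGpos2,
    ← Real.rpow_def_of_pos h1] at this

lemma summable_aux {α : ℝ} (hα : 0 < α) (hα1 : α < 1) {s : ℝ} (hs : 0 ≤ s) :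
    Summable (fun n : ℕ => ((n : ℝ) + 1) * bCoef α n * s ^ n) := by
  apply summable_of_ratio_norm_eventually_le (r := 1/2) (by norm_num)
  have htop : Tendsto (fun n : ℕ => ((α + 1) * n + 1 + α) ^ α) atTop atTop := by
    apply (tendsto_rpow_atTop hα).comp
    apply tendsto_atTop_add_const_right
    apply tendsto_atTop_add_const_right
    exact (tendsto_natCast_atTop_atTop (R := ℝ)).const_mul_atTop (by linarith)
  filter_upwards [htop.eventually_ge_atTop (4 * s + 1)] with n hn
  have hd : (2:ℝ) ≤ α * n + n + 2 := by
    have h := (Nat.cast_nonneg (α := ℝ) n)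
    nlinarith
  have hratio := gamma_ratio_lb hα hα1 hd
  set d : ℝ := α * n + n + 2 with hdd
  have hde : α * (n + 1) + (n : ℝ) + 2 = d + α := by rw [hdd]; ring
  have hd1 : d - 1 + α = (α + 1) * n + 1 + α := by rw [hdd]; ring
  have hG1 : 0 < Real.Gamma d := Real.Gamma_pos_of_pos (by linarith)
  have hG2 : 0 < Real.Gamma (d + α) := Real.Gamma_pos_of_pos (by linarith [hα])
  have hb := bCoef_pos (α := α) hα n
  have hq : Real.Gamma d / Real.Gamma (d + α) * (4 * s + 1) ≤ 1 := by
    rw [div_mul_eq_mul_div, div_le_one hG2]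
    calc Real.Gamma d * (4 * s + 1) ≤ Real.Gamma d * ((d - 1 + α) ^ α) := by
          apply mul_le_mul_of_nonneg_left _ hG1.le
          rw [hd1]; exact hn
      _ ≤ Real.Gamma (d + α) := by rw [mul_comm]; exact hratio
  have hqpos : 0 < Real.Gamma d / Real.Gamma (d + α) := div_pos hG1 hG2
  rw [bCoef_succ]
  rw [Real.norm_eq_abs, Real.norm_eq_abs, abs_of_nonneg (by positivity),
    abs_of_nonneg (by positivity)]
  push_cast
  rw [hde, ← hdd]
  set q : ℝ := Real.Gamma d / Real.Gamma (d + α)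
  have hsn : (0:ℝ) ≤ s ^ n := by positivity
  have h1 : ((n:ℝ) + 1 + 1) * (bCoef α n * q) * s ^ (n + 1)
      = ((n:ℝ) + 2) * q * s * (bCoef α n * s ^ n) := by ring
  rw [h1]
  have h2 : ((n:ℝ) + 2) * q * s ≤ 1/2 * ((n:ℝ) + 1) := by
    nlinarith [hq, hqpos.le, hs, mul_nonneg hqpos.le hs]
  calc ((n:ℝ) + 2) * q * s * (bCoef α n * s ^ n)
      ≤ 1/2 * ((n:ℝ) + 1) * (bCoef α n * s ^ n) := by
        apply mul_le_mul_of_nonneg_right h2 (by positivity)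
    _ = 1/2 * (((n:ℝ) + 1) * bCoef α n * s ^ n) := by ring

lemma betaIntegrable {a b x : ℝ} (ha : 0 < a) (hb : 0 < b) (hx : 0 < x) :
    IntervalIntegrable (fun t => t ^ (a - 1) * (x - t) ^ (b - 1)) volume 0 x := by
  have J1 : IntervalIntegrable (fun t => t ^ (a - 1) * (x - t) ^ (b - 1)) volume 0 (x/2) := by
    apply IntervalIntegrable.mul_continuousOn
    · exact intervalIntegral.intervalIntegrable_rpow' (by linarith)
    · apply ContinuousOn.rpow_const (by fun_prop)
      intro t ht
      rw [Set.uIcc_of_le (by linarith : (0:ℝ) ≤ x/2)] at ht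
      left
      have := ht.2
      intro h
      nlinarith [ht.1, ht.2]
  have J2 : IntervalIntegrable (fun t => t ^ (a - 1) * (x - t) ^ (b - 1)) volume (x/2) x := by
    apply IntervalIntegrable.continuousOn_mul
    · have h0 : IntervalIntegrable (fun t : ℝ => t ^ (b - 1)) volume 0 (x/2) :=
        intervalIntegral.intervalIntegrable_rpow' (by linarith)
      have h1 := h0.comp_sub_left x
      rw [sub_zero, show x - x/2 = x/2 by ring] at h1
      exact h1.symm
    · apply ContinuousOn.rpow_const (by fun_prop)
      intro t ht
      rw [Set.uIcc_of_le (by linarith : x/2 ≤ x)] at ht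
      left
      nlinarith [ht.1]
  exact J1.trans J2

lemma betaValue {a b x : ℝ} (ha : 0 < a) (hb : 0 < b) (hx : 0 < x) :
    ∫ t in (0:ℝ)..x, t ^ (a - 1) * (x - t) ^ (b - 1)
      = Real.Gamma a * Real.Gamma b / Real.Gamma (a + b) * x ^ (a + b - 1) := by
  have hC := Complex.betaIntegral_scaled (a : ℂ) (b : ℂ) hx
  have hcoe : (↑(∫ t in (0:ℝ)..x, t ^ (a - 1) * (x - t) ^ (b - 1)) : ℂ)
      = ∫ t in (0:ℝ)..x, (t : ℂ) ^ ((a : ℂ) - 1) * ((x : ℂ) - t) ^ ((b : ℂ) - 1) := by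
    rw [← intervalIntegral.integral_ofReal]
    rw [intervalIntegral.integral_of_le hx.le, intervalIntegral.integral_of_le hx.le]
    apply setIntegral_congr_fun measurableSet_Ioc
    intro t ht
    push_cast
    rw [Complex.ofReal_cpow ht.1.le, Complex.ofReal_cpow (by linarith [ht.2] : (0:ℝ) ≤ x - t)]
    push_cast
    ring
  have hbeta : Complex.betaIntegral a b
      = ((Real.Gamma a * Real.Gamma b / Real.Gamma (a + b) : ℝ) : ℂ) := by
    have h2 := Complex.Gamma_mul_Gamma_eq_betaIntegral
      (s := (a:ℂ)) (t := (b:ℂ)) (by simpa using ha) (by simpa using hb)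
    have hab : ((a:ℂ) + b) = ((a + b : ℝ) : ℂ) := by push_cast; ring
    rw [hab, Complex.Gamma_ofReal, Complex.Gamma_ofReal, Complex.Gamma_ofReal] at h2
    have hG : ((Real.Gamma (a+b) : ℝ) : ℂ) ≠ 0 := by
      exact_mod_cast (Real.Gamma_pos_of_pos (by linarith)).ne'
    push_cast
    rw [eq_div_iff hG, mul_comm]
    exact h2.symm
  have hxpow : ((x : ℂ)) ^ ((a : ℂ) + b - 1) = ((x ^ (a + b - 1) : ℝ) : ℂ) := by
    rw [Complex.ofReal_cpow hx.le]
    push_cast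
    ring_nf
  apply Complex.ofReal_injective
  rw [hcoe, hC, hbeta, hxpow]
  push_cast
  ring

lemma bCoef_antitone {α : ℝ} (hα : 0 < α) (n : ℕ) :
    bCoef α (n + 1) ≤ bCoef α n := by
  rw [bCoef_succ]
  have h2 : (2:ℝ) ≤ α * n + n + 2 := by
    have h := (Nat.cast_nonneg (α := ℝ) n); nlinarith
  have hG1 : 0 < Real.Gamma (α * n + n + 2) := Real.Gamma_pos_of_pos (by linarith)
  have hle : Real.Gamma (α * n + n + 2) ≤ Real.Gamma (α * (n + 1) + n + 2) := by
    apply le_of_lt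
    apply Real.Gamma_strictMonoOn_Ici (Set.mem_Ici.mpr h2)
      (Set.mem_Ici.mpr (by push_cast; nlinarith)) (by push_cast; nlinarith)
  nth_rewrite 2 [← mul_one (bCoef α n)]
  apply mul_le_mul_of_nonneg_left _ (bCoef_pos hα n).le
  rw [div_le_one (lt_of_lt_of_le hG1 hle)]
  exact hle

lemma summable_bs {α : ℝ} (hα : 0 < α) (hα1 : α < 1) {s : ℝ} (hs : 0 ≤ s) :
    Summable (fun n : ℕ => bCoef α n * s ^ n) := by
  apply Summable.of_nonneg_of_le
    (fun n => mul_nonneg (bCoef_pos hα n).le (pow_nonneg hs n))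
    (fun n => ?_) (summable_aux hα hα1 hs)
  have h1 : (1:ℝ) ≤ (n:ℝ) + 1 := by linarith [(Nat.cast_nonneg (α := ℝ) n)]
  nlinarith [mul_nonneg (bCoef_pos hα n).le (pow_nonneg hs n)]

lemma phi_hasDeriv {α : ℝ} (hα : 0 < α) (hα1 : α < 1) {τ : ℝ} (hτ : 0 < τ) :
    HasDerivAt (Phi α)
      (∑' n : ℕ, bCoef α n * ((n : ℝ) * (-(τ ^ (1 + α)) / (1 + α)) ^ (n - 1) * (-(τ ^ α)))) τ := by
  have h1α : (0:ℝ) < 1 + α := by linarith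
  set R : ℝ := τ + 1 with hR
  have hRpos : (0:ℝ) < R := by linarith
  set s : ℝ := R ^ (1 + α) / (1 + α) with hs
  have hspos : 0 < s := by positivity
  set g : ℕ → ℝ → ℝ := fun n y => bCoef α n * (-(y ^ (1 + α)) / (1 + α)) ^ n with hg
  set g' : ℕ → ℝ → ℝ := fun n y =>
    bCoef α n * ((n : ℝ) * (-(y ^ (1 + α)) / (1 + α)) ^ (n - 1) * (-(y ^ α))) with hg'
  set u : ℕ → ℝ := fun n => bCoef α n * ((n : ℝ) * s ^ (n - 1) * R ^ α) with hu
  have hderiv : ∀ n : ℕ, ∀ y ∈ Set.Ioo (0:ℝ) R, HasDerivAt (g n) (g' n y) y := by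
    intro n y hy
    have hy0 : y ≠ 0 := ne_of_gt hy.1
    have h1 : HasDerivAt (fun y : ℝ => y ^ (1 + α)) ((1 + α) * y ^ α) y := by
      have := Real.hasDerivAt_rpow_const (x := y) (p := 1 + α) (Or.inl hy0)
      simpa [add_sub_cancel_left] using this
    have h2 : HasDerivAt (fun y : ℝ => -(y ^ (1 + α)) / (1 + α)) (-(y ^ α)) y := by
      have h3 := (h1.neg).div_const (1 + α)
      refine h3.congr_deriv ?_
      rw [div_eq_iff (ne_of_gt h1α)]
      ring
    exact ((h2.pow n).const_mul (bCoef α n))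
  have hbound : ∀ n : ℕ, ∀ y ∈ Set.Ioo (0:ℝ) R, ‖g' n y‖ ≤ u n := by
    intro n y hy
    have hy0 : 0 < y := hy.1
    have hyR : y ≤ R := hy.2.le
    have ew : |(-(y ^ (1 + α)) / (1 + α))| = y ^ (1 + α) / (1 + α) := by
      rw [abs_div, abs_neg, abs_of_nonneg (Real.rpow_nonneg hy0.le _), abs_of_pos h1α]
    rw [hg', hu, Real.norm_eq_abs, abs_mul, abs_of_pos (bCoef_pos hα n), abs_mul, abs_mul,
      abs_pow, ew, abs_neg, abs_of_nonneg (Real.rpow_nonneg hy0.le _),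
      Nat.abs_cast]
    apply mul_le_mul_of_nonneg_left _ (bCoef_pos hα n).le
    have hws : y ^ (1 + α) / (1 + α) ≤ s := by
      rw [hs]; gcongr
    have hyRa : y ^ α ≤ R ^ α := by gcongr
    gcongr
  have hu_sum : Summable u := by
    rw [← summable_nat_add_iff 1]
    apply Summable.of_nonneg_of_le
      (fun n => by
        have hb := (bCoef_pos hα (n+1)).le
        have h0 : (0:ℝ) ≤ (↑(n+1):ℝ) * s ^ (n+1-1) * R ^ α := by positivity
        exact mul_nonneg hb h0)
      (fun n => ?_) ((summable_aux hα hα1 hspos.le).mul_left (R ^ α))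
    have h1 : u (n + 1) = bCoef α (n + 1) * (((n:ℝ) + 1) * s ^ n * R ^ α) := by
      rw [hu]; push_cast; ring_nf
    rw [h1]
    calc bCoef α (n + 1) * (((n:ℝ) + 1) * s ^ n * R ^ α)
        ≤ bCoef α n * (((n:ℝ) + 1) * s ^ n * R ^ α) := by
          apply mul_le_mul_of_nonneg_right (bCoef_antitone hα n) (by positivity)
      _ = R ^ α * (((n:ℝ) + 1) * bCoef α n * s ^ n) := by ring
  have hg0 : Summable fun n => g n τ := by
    apply Summable.of_abs
    apply Summable.of_nonneg_of_le (fun n => abs_nonneg _) (fun n => ?_)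
      (summable_bs hα hα1 (s := τ ^ (1 + α) / (1 + α)) (by positivity))
    rw [hg, abs_mul, abs_of_pos (bCoef_pos hα n), abs_pow, abs_div, abs_neg,
      abs_of_nonneg (Real.rpow_nonneg hτ.le _), abs_of_pos h1α]
  have hmem : τ ∈ Set.Ioo (0:ℝ) R := ⟨hτ, by rw [hR]; linarith⟩
  have := hasDerivAt_tsum_of_isPreconnected hu_sum isOpen_Ioo
    (convex_Ioo (0:ℝ) R).isPreconnected hderiv hbound hmem hg0 hmem
  exact this

set_option maxHeartbeats 1000000 in
private theorem stmt0_main {α : ℝ} (hα0 : 0 < α) (hα1 : α < 1) {x : ℝ} (hx : 0 < x) :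
    caputo α (Phi α) x = -(1/(1+α)) * (x * Phi α x) := by
  have h1α : (0:ℝ) < 1 + α := by linarith
  have h1αne : (1:ℝ) + α ≠ 0 := ne_of_gt h1α
  set G : ℝ := Real.Gamma (1 - α) with hGdef
  have hG : 0 < G := Real.Gamma_pos_of_pos (by linarith)
  set q : ℝ := -(1 + α)⁻¹ with hq
  set f : ℕ → ℝ → ℝ := fun n τ =>
    bCoef α n * ((n : ℝ) * (-(τ ^ (1 + α)) / (1 + α)) ^ (n - 1) * (-(τ ^ α))) * (x - τ) ^ (-α)
    with hfdef
  set S : ℕ → ℝ := fun m => -(G / (1 + α)) * (bCoef α m * q ^ m) * x ^ ((1 + α) * m + 1)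
    with hSdef
  -- positivity of a(m) := (1+α)(m+1)
  have hapos : ∀ m : ℕ, (0:ℝ) < (1 + α) * (m + 1) := by
    intro m
    have : (0:ℝ) < (m:ℝ) + 1 := by positivity
    positivity
  have hb1 : (0:ℝ) < 1 - α := by linarith
  -- model function facts
  have key1 : ∀ m : ℕ, IntegrableOn
      (fun τ => τ ^ ((1 + α) * (m + 1) - 1) * (x - τ) ^ (-α)) (Ioc 0 x) volume := by
    intro m
    have h := betaIntegrable (hapos m) hb1 hx
    rw [intervalIntegrable_iff_integrableOn_Ioc_of_le hx.le] at h
    simpa [show (1:ℝ) - α - 1 = -α by ring] using h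
  have key2 : ∀ m : ℕ, (∫ τ in Ioc (0:ℝ) x, τ ^ ((1 + α) * (m + 1) - 1) * (x - τ) ^ (-α))
      = Real.Gamma ((1 + α) * (m + 1)) * G / Real.Gamma ((1 + α) * (m + 1) + (1 - α))
        * x ^ ((1 + α) * (m + 1) - α) := by
    intro m
    have h := betaValue (hapos m) hb1 hx
    rw [intervalIntegral.integral_of_le hx.le] at h
    rw [show (1:ℝ) - α - 1 = -α by ring] at h
    rw [h, hGdef]
    congr 2
    ring
  -- pointwise form of f (m+1) on Ioc 0 x
  set K : ℕ → ℝ := fun m => -(bCoef α (m + 1) * ((m : ℝ) + 1) * q ^ m) with hKdef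
  have hfeq : ∀ m : ℕ, ∀ τ ∈ Ioc (0:ℝ) x,
      f (m + 1) τ = K m * (τ ^ ((1 + α) * (m + 1) - 1) * (x - τ) ^ (-α)) := by
    intro m τ hτ
    have hτ0 : 0 < τ := hτ.1
    have h1 : (-(τ ^ (1 + α)) / (1 + α)) ^ m = q ^ m * τ ^ ((1 + α) * (m:ℝ)) := by
      rw [show -(τ ^ (1 + α)) / (1 + α) = q * τ ^ (1 + α) by rw [hq]; ring, mul_pow]
      congr 1
      rw [Real.rpow_mul hτ0.le, Real.rpow_natCast]
    have h2 : τ ^ ((1 + α) * (m:ℝ)) * τ ^ α = τ ^ ((1 + α) * ((m:ℝ) + 1) - 1) := by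
      rw [← Real.rpow_add hτ0]
      congr 1
      ring
    simp only [hfdef, hKdef, Nat.add_sub_cancel]
    push_cast
    rw [h1, ← h2]
    ring
  -- scalar identity
  have keyS : ∀ m : ℕ,
      K m * (Real.Gamma ((1 + α) * (m + 1)) * G / Real.Gamma ((1 + α) * (m + 1) + (1 - α))
        * x ^ ((1 + α) * (m + 1) - α)) = S m := by
    intro m
    have hsne : ((1:ℝ) + α) * (m + 1) ≠ 0 := ne_of_gt (hapos m)
    have e3 : Real.Gamma ((1 + α) * (m + 1) + 1)
        = (1 + α) * (m + 1) * Real.Gamma ((1 + α) * (m + 1)) := Real.Gamma_add_one hsne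
    have e1 : α * (m:ℝ) + (m:ℝ) + 2 = (1 + α) * (m + 1) + (1 - α) := by ring
    have e2 : α * ((m:ℝ) + 1) + (m:ℝ) + 2 = (1 + α) * (m + 1) + 1 := by ring
    have e4 : x ^ ((1 + α) * ((m:ℝ) + 1) - α) = x ^ ((1 + α) * (m:ℝ) + 1) := by
      congr 1
      ring
    have hbs : bCoef α (m + 1) = bCoef α m *
        (Real.Gamma ((1 + α) * (m + 1) + (1 - α)) / Real.Gamma ((1 + α) * (m + 1) + 1)) := by
      rw [bCoef_succ, ← e1, ← e2]
    have hGs : (0:ℝ) < Real.Gamma ((1 + α) * (m + 1)) := Real.Gamma_pos_of_pos (hapos m)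
    have hGs2 : (0:ℝ) < Real.Gamma ((1 + α) * (m + 1) + (1 - α)) :=
      Real.Gamma_pos_of_pos (by linarith [hapos m])
    simp only [hKdef, hSdef]
    push_cast
    rw [hbs, e3, e4]
    field_simp
  -- f 0 = 0
  have hf0 : ∀ τ : ℝ, f 0 τ = 0 := by
    intro τ
    simp [hfdef]
  -- integrability of f (m+1) on Ioc
  have hInt : ∀ m : ℕ, IntegrableOn (f (m + 1)) (Ioc 0 x) volume := by
    intro m
    apply (((key1 m).const_mul (K m)).congr ?_)
    rw [EventuallyEq, ae_restrict_iff' measurableSet_Ioc]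
    exact ae_of_all _ (fun τ hτ => (hfeq m τ hτ).symm)
  -- value of integral of f (m+1)
  have hIval : ∀ m : ℕ, (∫ τ in Ioc (0:ℝ) x, f (m + 1) τ) = S m := by
    intro m
    rw [setIntegral_congr_fun measurableSet_Ioc (hfeq m), integral_const_mul, key2 m, keyS m]
  -- |S m| and summability
  have hSabs : ∀ m : ℕ, |S m| = (G / (1 + α) * x) * (bCoef α m * (x ^ (1 + α) / (1 + α)) ^ m) := by
    intro m
    have h1 : (x ^ (1 + α) / (1 + α)) ^ m = ((1 + α)⁻¹) ^ m * x ^ ((1 + α) * (m:ℝ)) := by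
      rw [div_eq_mul_inv, mul_pow, mul_comm]
      congr 1
      rw [Real.rpow_mul hx.le, Real.rpow_natCast]
    have h2 : x ^ ((1 + α) * (m:ℝ) + 1) = x ^ ((1 + α) * (m:ℝ)) * x := by
      rw [Real.rpow_add hx, Real.rpow_one]
    rw [hSdef, abs_mul, abs_mul, abs_mul, abs_neg, abs_div, abs_of_pos hG, abs_of_pos h1α,
      abs_of_pos (bCoef_pos hα0 m), abs_pow, hq, abs_neg, abs_inv, abs_of_pos h1α,
      abs_of_nonneg (Real.rpow_nonneg hx.le _), h1, h2]
    ring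
  have hSabs_sum : Summable (fun m => |S m|) := by
    simp only [hSabs]
    exact (summable_bs hα0 hα1 (by positivity : (0:ℝ) ≤ x ^ (1 + α) / (1 + α))).mul_left _
  have hS_sum : Summable S := hSabs_sum.of_abs
  -- measurability
  have hmeas : ∀ n : ℕ, AEStronglyMeasurable (f n) (volume.restrict (Ioc 0 x)) := by
    intro n
    apply Measurable.aestronglyMeasurable
    simp only [hfdef]
    fun_prop
  -- lintegral bound
  have hlin : ∀ m : ℕ, (∫⁻ τ in Ioc (0:ℝ) x, ‖f (m + 1) τ‖₊) = ENNReal.ofReal |S m| := by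
    intro m
    have habs : IntegrableOn (fun τ => |f (m + 1) τ|) (Ioc 0 x) volume := (hInt m).abs
    have h1 : (∫⁻ τ in Ioc (0:ℝ) x, ‖f (m + 1) τ‖₊)
        = ∫⁻ τ in Ioc (0:ℝ) x, ENNReal.ofReal |f (m + 1) τ| := by
      congr 1
      ext τ
      rw [← enorm_eq_nnnorm, Real.enorm_eq_ofReal_abs]
    rw [h1, ← ofReal_integral_eq_lintegral_ofReal habs (ae_of_all _ (fun τ => abs_nonneg _))]
    congr 1
    have h2 : ∀ τ ∈ Ioc (0:ℝ) x,
        |f (m + 1) τ| = |K m| * (τ ^ ((1 + α) * (m + 1) - 1) * (x - τ) ^ (-α)) := by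
      intro τ hτ
      rw [hfeq m τ hτ, abs_mul]
      congr 1
      rw [abs_of_nonneg]
      exact mul_nonneg (Real.rpow_nonneg hτ.1.le _) (Real.rpow_nonneg (by linarith [hτ.2]) _)
    rw [setIntegral_congr_fun measurableSet_Ioc h2, integral_const_mul, key2 m]
    rw [← keyS m, abs_mul]
    congr 1
    rw [abs_of_nonneg]
    apply mul_nonneg (div_nonneg (mul_nonneg (Real.Gamma_pos_of_pos (hapos m)).le hG.le)
      (Real.Gamma_pos_of_pos (by linarith [hapos m])).le) (Real.rpow_nonneg hx.le _)
  -- finiteness of the lintegral sum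
  have hfin : (∑' n : ℕ, ∫⁻ τ in Ioc (0:ℝ) x, ‖f n τ‖₊) ≠ ⊤ := by
    have h0 : (∫⁻ τ in Ioc (0:ℝ) x, ‖f 0 τ‖₊) = 0 := by simp [hf0]
    rw [tsum_eq_zero_add' ENNReal.summable, h0, zero_add]
    simp only [hlin]
    rw [← ENNReal.ofReal_tsum_of_nonneg (fun m => abs_nonneg _) hSabs_sum]
    exact ENNReal.ofReal_ne_top
  -- caputo as a sum of integrals
  have hstep1 : caputo α (Phi α) x = (1/G) * ∑' n : ℕ, ∫ τ in Ioc (0:ℝ) x, f n τ := by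
    rw [caputo, intervalIntegral.integral_of_le hx.le]
    congr 1
    have e5 : ∀ τ ∈ Ioc (0:ℝ) x, deriv (Phi α) τ * (x - τ) ^ (-α) = ∑' n, f n τ := by
      intro τ hτ
      rw [(phi_hasDeriv hα0 hα1 hτ.1).deriv, ← tsum_mul_right]
    rw [setIntegral_congr_fun measurableSet_Ioc e5, MeasureTheory.integral_tsum hmeas hfin]
  have hsum_int : Summable (fun n : ℕ => ∫ τ in Ioc (0:ℝ) x, f n τ) := by
    rw [← summable_nat_add_iff 1]
    simp only [hIval]
    exact hS_sum
  have hzero : (∫ τ in Ioc (0:ℝ) x, f 0 τ) = 0 := by simp [hf0]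
  rw [hstep1, Summable.tsum_eq_zero_add hsum_int, hzero, zero_add]
  simp only [hIval]
  have termEq : ∀ m : ℕ, (1/G) * S m
      = -(1/(1+α)) * (x * (bCoef α m * (-(x ^ (1 + α)) / (1 + α)) ^ m)) := by
    intro m
    have hxp : x ^ ((1+α) * (m:ℝ) + 1) = x * (x ^ (1+α)) ^ m := by
      rw [Real.rpow_add hx, Real.rpow_one, Real.rpow_mul hx.le, Real.rpow_natCast]
      ring
    have hwm : (-(x ^ (1+α)) / (1+α)) ^ m = q ^ m * (x ^ (1+α)) ^ m := by
      rw [show -(x ^ (1+α)) / (1+α) = q * x ^ (1+α) by rw [hq]; ring, mul_pow]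
    simp only [hSdef]
    rw [hxp, hwm]
    field_simp
  calc (1/G) * ∑' m, S m = ∑' m, (1/G) * S m := by rw [tsum_mul_left]
    _ = ∑' m, -(1/(1+α)) * (x * (bCoef α m * (-(x ^ (1 + α)) / (1 + α)) ^ m)) :=
        tsum_congr termEq
    _ = -(1/(1+α)) * (x * ∑' m, bCoef α m * (-(x ^ (1 + α)) / (1 + α)) ^ m) := by
        rw [tsum_mul_left, tsum_mul_left]
    _ = -(1/(1+α)) * (x * Phi α x) := by rw [Phi]

end AuxLemmas

/-- For every `α ∈ (0,1)`, the profile function `Φ` satisfies the fractional differential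
equation `D^α_C Φ(x) = −(1/(1+α))·x·Φ(x)` for all `x > 0`, together with `Φ(0) = 1`. -/
theorem stmt0 (α : ℝ) (hα : α ∈ Set.Ioo (0:ℝ) 1) :
    Phi α 0 = 1 ∧ ∀ x > (0:ℝ), caputo α (Phi α) x = -(1/(1+α)) * (x * Phi α x) := by
  obtain ⟨hα0, hα1⟩ := hα
  constructor
  · rw [Phi, tsum_eq_single 0]
    · simp [bCoef]
    · intro n hn
      rw [Real.zero_rpow (by positivity : (1:ℝ) + α ≠ 0)]
      simp [zero_pow hn]
  · intro x hx
    exact stmt0_main hα0 hα1 hx
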